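/- arXiv:1712.00279 — 2 statements merged into one kernel-verified Lean document; each statement's English description precedes it below -/
import Mathlib

section
/- Let n ≥ N ≥ 1 be integers and let i_1, …, i_N ∈ ℕ satisfy i_1 + ⋯ + i_N = n. Then | ln( n! / (i_1! ⋯ i_N!) ) + Σ_{k=1}^{N} i_k ln(i_k/n) | ≤ N ln n + 2N. -/
lemma log_fact_lb (m : ℕ) : (m:ℝ) * Real.log m - m ≤ Real.log (m.factorial) := by
  induction m with
  | zero => simp
  | succ m ih =>
    have h1 : Real.log ((m+1).factorial) = Real.log ((m:ℝ)+1) + Real.log (m.factorial) := by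
      rw [Nat.factorial_succ]
      push_cast
      rw [Real.log_mul (by positivity) (by positivity)]
    have key : (m:ℝ) * Real.log ((m:ℝ)+1) - (m:ℝ) * Real.log m ≤ 1 := by
      rcases Nat.eq_zero_or_pos m with h | h
      · subst h; simp
      · have hm : (0:ℝ) < m := by exact_mod_cast h
        have hlog := Real.log_le_sub_one_of_pos (show (0:ℝ) < ((m:ℝ)+1)/m by positivity)
        rw [Real.log_div (by positivity) (by positivity)] at hlog
        have h2 : ((m:ℝ)+1)/m - 1 = 1/m := by field_simp; ring
        rw [h2] at hlog
        have := mul_le_mul_of_nonneg_left hlog hm.le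
        have h3 : (m:ℝ) * (1/m) = 1 := by field_simp
        nlinarith
    push_cast [h1]
    nlinarith [ih]

lemma log_fact_ub (m : ℕ) :
    Real.log (m.factorial) ≤ (m:ℝ) * Real.log m - m + Real.log m + 1 := by
  induction m with
  | zero => simp
  | succ m ih =>
    have h1 : Real.log ((m+1).factorial) = Real.log ((m:ℝ)+1) + Real.log (m.factorial) := by
      rw [Nat.factorial_succ]
      push_cast
      rw [Real.log_mul (by positivity) (by positivity)]
    rcases Nat.eq_zero_or_pos m with h | h
    · subst h; simp [h1]
    · have hm : (0:ℝ) < m := by exact_mod_cast h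
      have key : 1 ≤ ((m:ℝ)+1) * Real.log ((m:ℝ)+1) - ((m:ℝ)+1) * Real.log m := by
        have hlog := Real.log_le_sub_one_of_pos (show (0:ℝ) < (m:ℝ)/((m:ℝ)+1) by positivity)
        rw [Real.log_div (by positivity) (by positivity)] at hlog
        have h2 : (m:ℝ)/((m:ℝ)+1) - 1 = -(1/((m:ℝ)+1)) := by field_simp; ring
        rw [h2] at hlog
        have := mul_le_mul_of_nonneg_left hlog (show (0:ℝ) ≤ (m:ℝ)+1 by positivity)
        have h3 : ((m:ℝ)+1) * (-(1/((m:ℝ)+1))) = -1 := by field_simp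
        nlinarith
      push_cast [h1]
      nlinarith [ih]

/-- **Multinomial coefficient estimate.**
Let `n ≥ N ≥ 1` be integers and let `i_1, …, i_N ∈ ℕ` satisfy `i_1 + ⋯ + i_N = n`. Then
`| ln( n! / (i_1! ⋯ i_N!) ) + Σ_{k=1}^{N} i_k ln(i_k/n) | ≤ N ln n + 2N`.
(The convention `0 ln 0 = 0` is automatic here, since `(0 : ℝ) * Real.log (0 / n) = 0`.) -/
theorem multinomial_log_estimate (n N : ℕ) (hN : 1 ≤ N) (hn : N ≤ n)
    (i : Fin N → ℕ) (hsum : ∑ k, i k = n) :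
    |Real.log ((n.factorial : ℝ) / ∏ k, ((i k).factorial : ℝ)) +
        ∑ k, (i k : ℝ) * Real.log ((i k : ℝ) / (n : ℝ))| ≤
      (N : ℝ) * Real.log n + 2 * N := by
  have hn1 : 1 ≤ n := le_trans hN hn
  have hnpos : (0:ℝ) < n := by exact_mod_cast lt_of_lt_of_le Nat.zero_lt_one hn1
  have hlogn : 0 ≤ Real.log n := Real.log_nonneg (by exact_mod_cast hn1)
  have hNpos : (1:ℝ) ≤ N := by exact_mod_cast hN
  -- split the log of the quotient
  have hprodpos : (0:ℝ) < ∏ k, ((i k).factorial : ℝ) := by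
    apply Finset.prod_pos; intro k _; exact_mod_cast (i k).factorial_pos
  have hdiv : Real.log ((n.factorial : ℝ) / ∏ k, ((i k).factorial : ℝ)) =
      Real.log (n.factorial) - ∑ k, Real.log ((i k).factorial) := by
    rw [Real.log_div (by exact_mod_cast n.factorial_pos.ne') hprodpos.ne']
    rw [Real.log_prod]
    intro k _; exact_mod_cast (i k).factorial_pos.ne'
  -- split the sum
  have hsumlog : ∑ k, (i k : ℝ) * Real.log ((i k : ℝ) / (n : ℝ)) =
      (∑ k, (i k : ℝ) * Real.log (i k)) - (n:ℝ) * Real.log n := by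
    have : ∀ k : Fin N, (i k : ℝ) * Real.log ((i k : ℝ) / (n : ℝ)) =
        (i k : ℝ) * Real.log (i k) - (i k : ℝ) * Real.log n := by
      intro k
      rcases Nat.eq_zero_or_pos (i k) with h | h
      · simp [h]
      · rw [Real.log_div (by exact_mod_cast h.ne') hnpos.ne']; ring
    rw [Finset.sum_congr rfl (fun k _ => this k), Finset.sum_sub_distrib,
      ← Finset.sum_mul]
    have : (∑ k, (i k : ℝ)) = (n:ℝ) := by exact_mod_cast congrArg (Nat.cast : ℕ → ℝ) hsum
    rw [this]
  -- pointwise bounds on summand logs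
  have hik_le : ∀ k : Fin N, i k ≤ n := by
    intro k
    rw [← hsum]
    exact Finset.single_le_sum (fun j _ => Nat.zero_le _) (Finset.mem_univ k)
  have hlogik : ∀ k : Fin N, Real.log (i k) ≤ Real.log n := by
    intro k
    rcases Nat.eq_zero_or_pos (i k) with h | h
    · simp [h, hlogn]
    · exact Real.log_le_log (by exact_mod_cast h) (by exact_mod_cast hik_le k)
  -- bounds on the sum of log factorials
  have hS1 : (∑ k, (i k : ℝ) * Real.log (i k)) - (n:ℝ) ≤
      ∑ k, Real.log ((i k).factorial) := by
    have : ∀ k : Fin N, (i k : ℝ) * Real.log (i k) - (i k : ℝ) ≤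
        Real.log ((i k).factorial) := fun k => log_fact_lb (i k)
    have h := Finset.sum_le_sum (s := Finset.univ) (fun k _ => this k)
    rw [Finset.sum_sub_distrib] at h
    have hs : (∑ k, (i k : ℝ)) = (n:ℝ) := by exact_mod_cast congrArg (Nat.cast : ℕ → ℝ) hsum
    rw [hs] at h
    exact h
  have hS2 : (∑ k, Real.log ((i k).factorial)) ≤
      (∑ k, (i k : ℝ) * Real.log (i k)) - (n:ℝ) + (N:ℝ) * Real.log n + (N:ℝ) := by
    have : ∀ k : Fin N, Real.log ((i k).factorial) ≤
        (i k : ℝ) * Real.log (i k) - (i k : ℝ) + Real.log n + 1 := by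
      intro k
      have := log_fact_ub (i k)
      have h2 := hlogik k
      linarith
    have h := Finset.sum_le_sum (s := Finset.univ) (fun k _ => this k)
    have hs : (∑ k, (i k : ℝ)) = (n:ℝ) := by exact_mod_cast congrArg (Nat.cast : ℕ → ℝ) hsum
    simp only [Finset.sum_add_distrib, Finset.sum_sub_distrib, hs,
      Finset.sum_const, Finset.card_univ, Fintype.card_fin, nsmul_eq_mul,
      mul_one] at h
    linarith
  have hA1 := log_fact_lb n
  have hA2 := log_fact_ub n
  rw [hdiv, hsumlog]
  rw [abs_le]
  constructor <;> nlinarith [hS1, hS2, hA1, hA2, hlogn, hNpos]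
end

section
/- Asymptotically (for ℓ, m large enough, q small enough, ℓq close enough to a and m/ℓ close enough to α), for any integer k ≥ 0, any ε > 0 and any d ∈ 𝒩_k: E( τ*_k | D_0 = d ) ≤ κ^{ℓ(1+ε)}. -/
open scoped BigOperators Classical
open Filter

noncomputable section

/-- Probability mass function of the binomial distribution. -/
def binomPMF (n : ℕ) (p : ℝ) (k : ℕ) : ℝ :=
  (n.choose k : ℝ) * p ^ k * (1 - p) ^ (n - k)

/-- Lumped mutation matrix `M(i,j) = P(i - X + Y = j)` where `X ~ Bin(i, q/(κ-1))`
and `Y ~ Bin(ℓ-i, q)` are independent. -/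
def Mmut (κ ℓ : ℕ) (q : ℝ) (i j : ℕ) : ℝ :=
  ∑ x ∈ Finset.range (i + 1), ∑ y ∈ Finset.range (ℓ - i + 1),
    (if i + y = j + x then binomPMF i (q / ((κ : ℝ) - 1)) x * binomPMF (ℓ - i) q y else 0)

/-- Occupancy states: ordered partitions of `m` in at most `ℓ+1` parts. -/
abbrev Occ (ℓ m : ℕ) : Type := {o : Fin (ℓ + 1) → Fin (m + 1) // ∑ h, (o h : ℕ) = m}

/-- Total fitness of a population. -/
def fitSum (A : ℕ → ℝ) {ℓ m : ℕ} (o : Occ ℓ m) : ℝ :=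
  ∑ j : Fin (ℓ + 1), ((o.1 j : ℕ) : ℝ) * A (j : ℕ)

/-- Transition matrix of the occupancy process (Wright--Fisher). -/
def transP (κ : ℕ) (q : ℝ) (A : ℕ → ℝ) {ℓ m : ℕ} (o o' : Occ ℓ m) : ℝ :=
  ((m.factorial : ℝ) / ∏ h : Fin (ℓ + 1), (((o'.1 h : ℕ)).factorial : ℝ)) *
    ∏ h : Fin (ℓ + 1), ((∑ k : Fin (ℓ + 1), ((o.1 k : ℕ) : ℝ) * A (k : ℕ) * Mmut κ ℓ q (k : ℕ) (h : ℕ)) / fitSum A o)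
      ^ ((o'.1 h : ℕ))

/-- `n`-step transition probabilities of the occupancy process. -/
def nstep (κ : ℕ) (q : ℝ) (A : ℕ → ℝ) {ℓ m : ℕ} : ℕ → Occ ℓ m → Occ ℓ m → ℝ
  | 0, o, o' => if o = o' then 1 else 0
  | n + 1, o, o' => ∑ u : Occ ℓ m, nstep κ q A n o u * transP κ q A u o'

/-- Projection keeping the first `K+1` coordinates. -/
def projK (K : ℕ) {ℓ m : ℕ} (o : Occ ℓ m) : Fin (K + 1) → ℕ :=
  fun i => if h : (i : ℕ) < ℓ + 1 then (o.1 ⟨(i : ℕ), h⟩ : ℕ) else 0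

/-- Normalized projection `π_K(o)/m`. -/
def scaled (K : ℕ) {ℓ m : ℕ} (o : Occ ℓ m) : Fin (K + 1) → ℝ :=
  fun i => (projK K o i : ℝ) / (m : ℝ)

/-- `P(Z_l ∈ S | O_0 = o)`. -/
def probZin (κ : ℕ) (q : ℝ) (A : ℕ → ℝ) (K : ℕ) {ℓ m : ℕ} (l : ℕ) (o : Occ ℓ m)
    (S : Set (Fin (K + 1) → ℕ)) : ℝ :=
  ∑ o' : Occ ℓ m, (if projK K o' ∈ S then nstep κ q A l o o' else 0)

/-- `P(Z_t ∈ S for all 1 ≤ t ≤ n | O_0 = o)`. -/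
def stayNext (κ : ℕ) (q : ℝ) (A : ℕ → ℝ) (K : ℕ) {ℓ m : ℕ} (S : Set (Fin (K + 1) → ℕ)) :
    ℕ → Occ ℓ m → ℝ
  | 0, _ => 1
  | n + 1, o => ∑ o' : Occ ℓ m, transP κ q A o o' *
      (if projK K o' ∈ S then stayNext κ q A K S n o' else 0)

/-- `P(Z_t ∈ S for all 0 ≤ t ≤ n | O_0 = o)`. -/
def stayAll (κ : ℕ) (q : ℝ) (A : ℕ → ℝ) (K : ℕ) {ℓ m : ℕ} (S : Set (Fin (K + 1) → ℕ))
    (n : ℕ) (o : Occ ℓ m) : ℝ :=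
  if projK K o ∈ S then stayNext κ q A K S n o else 0

/-- Expected hitting time of `{Z = 0}`: `E(τ_0) = ∑_{n ≥ 0} P(τ_0 > n)`. -/
def hitZeroExp (κ : ℕ) (q : ℝ) (A : ℕ → ℝ) (K : ℕ) {ℓ m : ℕ} (o : Occ ℓ m) : ℝ :=
  ∑' n : ℕ, stayAll κ q A K {z | z ≠ 0} n o

/-- Extended-real logarithm, with `log x = -∞` for `x ≤ 0`. -/
def elog (x : ℝ) : EReal := if x ≤ 0 then ⊥ else ((Real.log x : ℝ) : EReal)

/-- ℓ¹ distance on `ℝ^{K+1}`. -/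
def l1dist {n : ℕ} (x y : Fin n → ℝ) : ℝ := ∑ i, |x i - y i|

/-- The simplex `𝒟`. -/
def simplexD (K : ℕ) : Set (Fin (K + 1) → ℝ) := {r | (∀ i, 0 ≤ r i) ∧ ∑ i, r i ≤ 1}

/-- Mean fitness `φ`. -/
def phiFn (K : ℕ) (A : ℕ → ℝ) (r : Fin (K + 1) → ℝ) : ℝ := 1 + ∑ h, r h * (A (h : ℕ) - 1)

/-- The limit map `G`. -/
def Gmap (K : ℕ) (A : ℕ → ℝ) (a : ℝ) (r : Fin (K + 1) → ℝ) : Fin (K + 1) → ℝ :=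
  fun i => (phiFn K A r)⁻¹ *
    ∑ h : Fin (K + 1), (if (h : ℕ) ≤ (i : ℕ) then
        r h * A (h : ℕ) * a ^ ((i : ℕ) - (h : ℕ)) / (((i : ℕ) - (h : ℕ)).factorial : ℝ)
      else 0)

/-- Term `t ln(t/p)` of the relative entropy, with conventions `0 ln 0 = 0 ln (0/0) = 0`
and value `∞` when `t > 0` and `p = 0`. -/
def klTerm (p t : ℝ) : EReal :=
  if t = 0 then 0 else if p = 0 then ⊤ else ((t * Real.log (t / p) : ℝ) : EReal)

/-- The rate function `I_K(p, t)`. -/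
def IkFn (K : ℕ) (p t : Fin (K + 1) → ℝ) : EReal :=
  (∑ k, klTerm (p k) (t k)) + klTerm (1 - ∑ k, p k) (1 - ∑ k, t k)

/-- `V_1(r,t) = I_K(G(r), t)`. -/
def V1 (K : ℕ) (A : ℕ → ℝ) (a : ℝ) (r t : Fin (K + 1) → ℝ) : EReal :=
  IkFn K (Gmap K A a r) t

/-- `V_l(r,t)`, the `l`-step rate function. -/
def Vl (K : ℕ) (A : ℕ → ℝ) (a : ℝ) (l : ℕ) (r t : Fin (K + 1) → ℝ) : EReal :=
  if l = 1 then V1 K A a r t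
  else ⨅ s : {s : ℕ → Fin (K + 1) → ℝ // s 0 = r ∧ s l = t ∧ ∀ k ≤ l, s k ∈ simplexD K},
    ∑ k ∈ Finset.range l, V1 K A a (s.1 k) (s.1 (k + 1))

/-- `V(r,t) = inf_{l ≥ 1} V_l(r,t)`. -/
def Vmin (K : ℕ) (A : ℕ → ℝ) (a : ℝ) (r t : Fin (K + 1) → ℝ) : EReal :=
  ⨅ l : ℕ, Vl K A a (l + 1) r t

/-- The index set `I_A`. -/
def idxSet (K : ℕ) (A : ℕ → ℝ) (a : ℝ) : Set ℕ :=
  {b | b ≤ K ∧ 1 < A b * Real.exp (-a) ∧ ∀ j, b < j → A j < A b} ∪ {K + 1}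

/-- Standing hypotheses on the fitness function. -/
def fitOK (K : ℕ) (A : ℕ → ℝ) : Prop :=
  (∀ k, 0 < A k) ∧ (∀ k, 1 ≤ k → A k < A 0) ∧ A K ≠ 1 ∧ ∀ k, K + 1 ≤ k → A k = 1

/-- `ρ` is the unique fixed point of `G` with positive first coordinate. -/
def isRho0 (K : ℕ) (A : ℕ → ℝ) (a : ℝ) (ρ : Fin (K + 1) → ℝ) : Prop :=
  ρ ∈ simplexD K ∧ Gmap K A a ρ = ρ ∧ 0 < ρ 0 ∧
    ∀ r ∈ simplexD K, Gmap K A a r = r → 0 < r 0 → r = ρ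

/-- The asymptotic regime `ℓ, m → ∞`, `q → 0`, `ℓq → a`, encoded by sequences. -/
structure RegimeSeq (a : ℝ) (ℓs ms : ℕ → ℕ) (qs : ℕ → ℝ) : Prop where
  hl : Tendsto ℓs atTop atTop
  hm : Tendsto ms atTop atTop
  hq01 : ∀ n, 0 < qs n ∧ qs n < 1
  hq : Tendsto qs atTop (nhds 0)
  hlq : Tendsto (fun n => (ℓs n : ℝ) * qs n) atTop (nhds a)

/-- The asymptotic regime with, in addition, `m/ℓ → α`. -/
structure RegimeSeqα (a α : ℝ) (ℓs ms : ℕ → ℕ) (qs : ℕ → ℝ)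
    extends RegimeSeq a ℓs ms qs : Prop where
  hml : Tendsto (fun n => (ms n : ℝ) / (ℓs n : ℝ)) atTop (nhds α)

/-- "Asymptotically": for `ℓ, m` large enough, `q` small enough, `ℓq` close enough to `a`. -/
def Asymp (a : ℝ) (P : ℕ → ℕ → ℝ → Prop) : Prop :=
  ∃ ε > (0 : ℝ), ∃ N : ℕ, ∀ ℓ m : ℕ, ∀ q : ℝ,
    N ≤ ℓ → N ≤ m → 0 < q → q < ε → |(ℓ : ℝ) * q - a| < ε → P ℓ m q

/-- "Asymptotically", with in addition `m/ℓ` close enough to `α`. -/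
def Asympα (a α : ℝ) (P : ℕ → ℕ → ℝ → Prop) : Prop :=
  ∃ ε > (0 : ℝ), ∃ N : ℕ, ∀ ℓ m : ℕ, ∀ q : ℝ,
    N ≤ ℓ → N ≤ m → 0 < q → q < ε → |(ℓ : ℝ) * q - a| < ε →
      |(m : ℝ) / (ℓ : ℝ) - α| < ε → P ℓ m q

/-- Relative interior of `U` in `𝒟`. -/
def relInterior (K : ℕ) (U : Set (Fin (K + 1) → ℝ)) : Set (Fin (K + 1) → ℝ) :=
  {t | t ∈ simplexD K ∧ ∃ V, IsOpen V ∧ t ∈ V ∧ V ∩ simplexD K ⊆ U}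

/-- Invariant probability measure of the occupancy process. -/
def invariantProb (κ : ℕ) (q : ℝ) (A : ℕ → ℝ) {ℓ m : ℕ} (μ : Occ ℓ m → ℝ) : Prop :=
  (∀ o, 0 ≤ μ o) ∧ (∑ o, μ o = 1) ∧ ∀ o', ∑ o, μ o * transP κ q A o o' = μ o'

/-- `P(D_t ∈ S for all 0 ≤ t ≤ n | D_0 = d)` for the neutral distance process. -/
def stayD (κ ℓ m : ℕ) (q : ℝ) (S : Set (Fin m → Fin (ℓ + 1))) :
    ℕ → (Fin m → Fin (ℓ + 1)) → ℝ
  | 0, d => if d ∈ S then 1 else 0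
  | n + 1, d => if d ∈ S then
      ∑ e : Fin m → Fin (ℓ + 1),
        (∏ i : Fin m, ((1 / (m : ℝ)) * ∑ j : Fin m, Mmut κ ℓ q (d j : ℕ) (e i : ℕ))) *
          stayD κ ℓ m q S n e
    else 0

namespace DiscoveryAux

open Finset

lemma binomPMF_nonneg {p : ℝ} (h0 : 0 ≤ p) (h1 : p ≤ 1) (n k : ℕ) : 0 ≤ binomPMF n p k := by
  unfold binomPMF
  have : (0:ℝ) ≤ 1 - p := by linarith
  positivity

lemma binomPMF_sum (n : ℕ) (p : ℝ) : ∑ x ∈ Finset.range (n+1), binomPMF n p x = 1 := by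
  have h : (p + (1 - p)) ^ n = 1 := by norm_num
  rw [add_pow] at h
  rw [← h]
  exact Finset.sum_congr rfl fun x _ => by unfold binomPMF; ring

lemma Mmut_nonneg {κ : ℕ} (hκ : 2 ≤ κ) {q : ℝ} (h0 : 0 ≤ q) (h1 : q ≤ 1) (ℓ i j : ℕ) :
    0 ≤ Mmut κ ℓ q i j := by
  have hκ1 : (1:ℝ) ≤ (κ:ℝ) - 1 := by
    have : (2:ℝ) ≤ (κ:ℝ) := by exact_mod_cast hκ
    linarith
  have hp0 : 0 ≤ q / ((κ:ℝ) - 1) := by positivity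
  have hp1 : q / ((κ:ℝ) - 1) ≤ 1 := by
    rw [div_le_one (by linarith)]; linarith
  unfold Mmut
  refine Finset.sum_nonneg fun x _ => Finset.sum_nonneg fun y _ => ?_
  split
  · exact mul_nonneg (binomPMF_nonneg hp0 hp1 _ _) (binomPMF_nonneg h0 h1 _ _)
  · exact le_refl 0
  
lemma Mmut_sum_mul (κ ℓ : ℕ) (q : ℝ) {i : ℕ} (hi : i ≤ ℓ) (f : ℕ → ℝ) :
    ∑ j ∈ Finset.range (ℓ+1), Mmut κ ℓ q i j * f j
      = ∑ x ∈ Finset.range (i+1), ∑ y ∈ Finset.range (ℓ - i + 1),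
          binomPMF i (q/((κ:ℝ)-1)) x * binomPMF (ℓ-i) q y * f (i + y - x) := by
  unfold Mmut
  simp only [Finset.sum_mul, ite_mul, zero_mul]
  rw [Finset.sum_comm]
  refine Finset.sum_congr rfl fun x hx => ?_
  rw [Finset.sum_comm]
  refine Finset.sum_congr rfl fun y hy => ?_
  simp only [Finset.mem_range] at hx hy
  have hmem : i + y - x ∈ Finset.range (ℓ+1) := by
    simp only [Finset.mem_range]; omega
  have hcond : ∀ j, (i + y = j + x) ↔ (j = i + y - x) := fun j => by omega
  calc ∑ j ∈ Finset.range (ℓ+1),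
        (if i+y = j+x then binomPMF i (q/((κ:ℝ)-1)) x * binomPMF (ℓ-i) q y * f j else 0)
      = ∑ j ∈ Finset.range (ℓ+1),
        (if j = i+y-x then binomPMF i (q/((κ:ℝ)-1)) x * binomPMF (ℓ-i) q y * f j else 0) :=
        Finset.sum_congr rfl fun j _ => if_congr (hcond j) rfl rfl
    _ = binomPMF i (q/((κ:ℝ)-1)) x * binomPMF (ℓ-i) q y * f (i + y - x) := by
        rw [Finset.sum_ite_eq' (Finset.range (ℓ+1)) (i+y-x)
          (fun j => binomPMF i (q/((κ:ℝ)-1)) x * binomPMF (ℓ-i) q y * f j), if_pos hmem]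

lemma Mmut_row_sum (κ ℓ : ℕ) (q : ℝ) {i : ℕ} (hi : i ≤ ℓ) :
    ∑ j ∈ Finset.range (ℓ+1), Mmut κ ℓ q i j = 1 := by
  have h := Mmut_sum_mul κ ℓ q hi (fun _ => 1)
  simp only [mul_one] at h
  rw [h, ← Finset.sum_mul_sum, binomPMF_sum, binomPMF_sum, one_mul]

lemma binom_weighted_sum (n : ℕ) (p s w : ℝ) :
    ∑ x ∈ Finset.range (n+1), binomPMF n p x * (s ^ x * w ^ (n - x)) = (p*s + (1-p)*w) ^ n := by
  rw [add_pow]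
  exact Finset.sum_congr rfl fun x _ => by unfold binomPMF; rw [mul_pow, mul_pow]; ring

lemma hit_step (κ ℓ : ℕ) (q : ℝ) {i : ℕ} (hi : i ≤ ℓ) (s w : ℝ) :
    ∑ j ∈ Finset.range (ℓ+1), Mmut κ ℓ q i j * (s ^ (ℓ - j) * w ^ j)
      = ((q/((κ:ℝ)-1)) * s + (1 - q/((κ:ℝ)-1)) * w) ^ i * (q*w + (1-q)*s) ^ (ℓ - i) := by
  rw [Mmut_sum_mul κ ℓ q hi]
  have key : ∀ x ∈ Finset.range (i+1), ∀ y ∈ Finset.range (ℓ-i+1),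
      binomPMF i (q/((κ:ℝ)-1)) x * binomPMF (ℓ-i) q y * (s ^ (ℓ - (i+y-x)) * w ^ (i+y-x))
      = (binomPMF i (q/((κ:ℝ)-1)) x * (s^x * w^(i-x))) *
        (binomPMF (ℓ-i) q y * (w^y * s^((ℓ-i) - y))) := by
    intro x hx y hy
    simp only [Finset.mem_range] at hx hy
    have e1 : ℓ - (i+y-x) = ((ℓ-i) - y) + x := by omega
    have e2 : i + y - x = (i-x) + y := by omega
    rw [e1, e2, pow_add, pow_add]; ring
  rw [Finset.sum_congr rfl fun x hx => Finset.sum_congr rfl fun y hy => key x hx y hy]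
  rw [← Finset.sum_mul_sum, binom_weighted_sum i (q/((κ:ℝ)-1)) s w,
    binom_weighted_sum (ℓ-i) q w s]

def lamP (κ : ℕ) (q : ℝ) : ℝ := 1 - q * κ / ((κ:ℝ) - 1)

def sP (κ : ℕ) (q : ℝ) (n : ℕ) : ℝ := 1/κ + (1 - 1/κ) * (lamP κ q)^n

def wP (κ : ℕ) (q : ℝ) (n : ℕ) : ℝ := (1 - (lamP κ q)^n) / κ

lemma kappa_facts {κ : ℕ} (hκ : 2 ≤ κ) : (2:ℝ) ≤ (κ:ℝ) ∧ ((κ:ℝ) - 1) ≠ 0 ∧ (κ:ℝ) ≠ 0 := by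
  have h2 : (2:ℝ) ≤ (κ:ℝ) := by exact_mod_cast hκ
  refine ⟨h2, by linarith, by linarith⟩

lemma sw_rec_w {κ : ℕ} (hκ : 2 ≤ κ) (q : ℝ) (n : ℕ) :
    (q/((κ:ℝ)-1)) * sP κ q n + (1 - q/((κ:ℝ)-1)) * wP κ q n = wP κ q (n+1) := by
  obtain ⟨h2, h1, h0⟩ := kappa_facts hκ
  unfold sP wP
  rw [pow_succ]
  generalize lamP κ q ^ n = L
  unfold lamP
  field_simp
  ring

lemma sw_rec_s {κ : ℕ} (hκ : 2 ≤ κ) (q : ℝ) (n : ℕ) :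
    q * wP κ q n + (1-q) * sP κ q n = sP κ q (n+1) := by
  obtain ⟨h2, h1, h0⟩ := kappa_facts hκ
  unfold sP wP
  rw [pow_succ]
  generalize lamP κ q ^ n = L
  unfold lamP
  field_simp
  ring

lemma F_step {κ : ℕ} (hκ : 2 ≤ κ) (ℓ : ℕ) (q : ℝ) {i : ℕ} (hi : i ≤ ℓ) (n : ℕ) :
    ∑ j ∈ Finset.range (ℓ+1), Mmut κ ℓ q i j * (sP κ q n ^ (ℓ - j) * wP κ q n ^ j)
      = sP κ q (n+1) ^ (ℓ - i) * wP κ q (n+1) ^ i := by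
  rw [hit_step κ ℓ q hi, sw_rec_w hκ, sw_rec_s hκ, mul_comm]

lemma lam_bounds {κ : ℕ} (hκ : 2 ≤ κ) {q : ℝ} (h0 : 0 < q) (h1 : q ≤ 1/2) :
    0 ≤ lamP κ q ∧ lamP κ q ≤ 1 - q := by
  obtain ⟨h2, hk1, hk0⟩ := kappa_facts hκ
  have hpos : (0:ℝ) < (κ:ℝ) - 1 := by linarith
  constructor
  · unfold lamP
    have : q * κ / ((κ:ℝ) - 1) ≤ 2 * q := by
      rw [div_le_iff₀ hpos]; nlinarith
    linarith
  · unfold lamP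
    have : q ≤ q * κ / ((κ:ℝ) - 1) := by
      rw [le_div_iff₀ hpos]; nlinarith
    linarith

lemma sw_bounds {κ : ℕ} (hκ : 2 ≤ κ) {q : ℝ} (h0 : 0 < q) (h1 : q ≤ 1/2) (n : ℕ) :
    0 ≤ wP κ q n ∧ wP κ q n ≤ sP κ q n ∧ sP κ q n ≤ 1 := by
  obtain ⟨h2, hk1, hk0⟩ := kappa_facts hκ
  obtain ⟨hl0, hl1⟩ := lam_bounds hκ h0 h1
  have hL1 : lamP κ q ≤ 1 := by linarith
  have hLn0 : 0 ≤ lamP κ q ^ n := pow_nonneg hl0 n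
  have hLn1 : lamP κ q ^ n ≤ 1 := pow_le_one₀ hl0 hL1
  have hκpos : (0:ℝ) < κ := by linarith
  have h1κ : 0 ≤ 1 - 1/(κ:ℝ) := by
    have : 1/(κ:ℝ) ≤ 1 := by rw [div_le_one hκpos]; linarith
    linarith
  refine ⟨by unfold wP; exact div_nonneg (by linarith) (by linarith), ?_, ?_⟩
  · have hδ : sP κ q n - wP κ q n = lamP κ q ^ n := by
      unfold sP wP; field_simp; ring
    linarith
  · unfold sP
    have : (1-1/(κ:ℝ)) * lamP κ q ^ n ≤ (1-1/(κ:ℝ)) := mul_le_of_le_one_right h1κ hLn1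
    have hκinv : 0 < 1/(κ:ℝ) := by positivity
    linarith

section Proc

variable {κ ℓ m : ℕ} {q : ℝ} {S : Set (Fin m → Fin (ℓ + 1))}

def kerD (κ ℓ m : ℕ) (q : ℝ) (d e : Fin m → Fin (ℓ + 1)) : ℝ :=
  ∏ i : Fin m, ((1 / (m : ℝ)) * ∑ j : Fin m, Mmut κ ℓ q (d j : ℕ) (e i : ℕ))

lemma stayD_zero (d : Fin m → Fin (ℓ+1)) :
    stayD κ ℓ m q S 0 d = if d ∈ S then 1 else 0 := rfl

lemma stayD_succ (n : ℕ) (d : Fin m → Fin (ℓ+1)) :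
    stayD κ ℓ m q S (n+1) d = if d ∈ S then
      ∑ e : Fin m → Fin (ℓ+1), kerD κ ℓ m q d e * stayD κ ℓ m q S n e else 0 := rfl

lemma ker_nonneg (hκ : 2 ≤ κ) (hq0 : 0 ≤ q) (hq1 : q ≤ 1) (d e : Fin m → Fin (ℓ+1)) :
    0 ≤ kerD κ ℓ m q d e := by
  refine Finset.prod_nonneg fun i _ => mul_nonneg (by positivity) ?_
  exact Finset.sum_nonneg fun j _ => Mmut_nonneg hκ hq0 hq1 ℓ _ _

lemma nu_sum (hm : 1 ≤ m) (d : Fin m → Fin (ℓ+1)) :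
    ∑ v : Fin (ℓ+1), ((1 / (m : ℝ)) * ∑ j : Fin m, Mmut κ ℓ q (d j : ℕ) (v : ℕ)) = 1 := by
  have hrow : ∀ j : Fin m, ∑ v : Fin (ℓ+1), Mmut κ ℓ q (d j : ℕ) (v : ℕ) = 1 := by
    intro j
    rw [Fin.sum_univ_eq_sum_range (fun u => Mmut κ ℓ q (d j : ℕ) u) (ℓ+1)]
    exact Mmut_row_sum κ ℓ q (Nat.lt_succ_iff.mp (d j).isLt)
  have hm0 : (m:ℝ) ≠ 0 := by
    have : (0:ℝ) < m := by exact_mod_cast Nat.lt_of_lt_of_le Nat.zero_lt_one hm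
    linarith
  rw [← Finset.mul_sum, Finset.sum_comm]
  simp only [hrow]
  rw [Finset.sum_const, Finset.card_univ, Fintype.card_fin, nsmul_eq_mul, mul_one,
    one_div, inv_mul_cancel₀ hm0]

lemma ker_sum (hm : 1 ≤ m) (d : Fin m → Fin (ℓ+1)) :
    ∑ e : Fin m → Fin (ℓ+1), kerD κ ℓ m q d e = 1 := by
  unfold kerD
  have h := Finset.prod_univ_sum (fun _ : Fin m => (Finset.univ : Finset (Fin (ℓ+1))))
      (fun _ v => (1 / (m : ℝ)) * ∑ j : Fin m, Mmut κ ℓ q (d j : ℕ) (v : ℕ))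
  rw [Fintype.piFinset_univ] at h
  rw [← h, Finset.prod_congr rfl fun i _ => nu_sum hm d]
  simp

lemma ker_marg (hm : 1 ≤ m) (d : Fin m → Fin (ℓ+1)) (j : Fin m) (F : ℕ → ℝ) :
    ∑ e : Fin m → Fin (ℓ+1), kerD κ ℓ m q d e * F (e j : ℕ)
      = ∑ v : Fin (ℓ+1), ((1 / (m : ℝ)) * ∑ j' : Fin m, Mmut κ ℓ q (d j' : ℕ) (v : ℕ)) * F (v : ℕ) := by
  set ν : Fin (ℓ+1) → ℝ := fun v => (1 / (m : ℝ)) * ∑ j' : Fin m, Mmut κ ℓ q (d j' : ℕ) (v : ℕ) with hν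
  have step1 : ∀ e : Fin m → Fin (ℓ+1),
      kerD κ ℓ m q d e * F (e j : ℕ) = ∏ i : Fin m, (ν (e i) * if j = i then F (e i : ℕ) else 1) := by
    intro e
    rw [Finset.prod_mul_distrib, Finset.prod_ite_eq Finset.univ j (fun i => F (e i : ℕ))]
    simp [kerD, ν]
  simp only [step1]
  have h := Finset.prod_univ_sum (fun _ : Fin m => (Finset.univ : Finset (Fin (ℓ+1))))
      (fun i v => ν v * if j = i then F (v : ℕ) else 1)
  rw [Fintype.piFinset_univ] at h
  rw [← h]
  have step2 : ∀ i : Fin m, (∑ v : Fin (ℓ+1), ν v * if j = i then F (v : ℕ) else 1)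
      = if j = i then ∑ v : Fin (ℓ+1), ν v * F (v : ℕ) else 1 := by
    intro i
    by_cases h : j = i
    · simp [h]
    · simp only [h, ↓reduceIte, mul_one]; exact nu_sum hm d
  rw [Finset.prod_congr rfl fun i _ => step2 i,
    Finset.prod_ite_eq Finset.univ j (fun _ => ∑ v : Fin (ℓ+1), ν v * F (v : ℕ))]
  simp [ν, one_div]

end Proc

section Stay

variable {κ ℓ m : ℕ} {q : ℝ} {S : Set (Fin m → Fin (ℓ + 1))}

lemma stay_nonneg (hκ : 2 ≤ κ) (hq0 : 0 ≤ q) (hq1 : q ≤ 1) :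
    ∀ (n : ℕ) (d : Fin m → Fin (ℓ+1)), 0 ≤ stayD κ ℓ m q S n d := by
  intro n
  induction n with
  | zero => intro d; rw [stayD_zero]; split <;> norm_num
  | succ n ih =>
    intro d
    rw [stayD_succ]
    split
    · exact Finset.sum_nonneg fun e _ => mul_nonneg (ker_nonneg hκ hq0 hq1 d e) (ih e)
    · exact le_refl 0

lemma stay_le_one (hκ : 2 ≤ κ) (hq0 : 0 ≤ q) (hq1 : q ≤ 1) (hm : 1 ≤ m) :
    ∀ (n : ℕ) (d : Fin m → Fin (ℓ+1)), stayD κ ℓ m q S n d ≤ 1 := by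
  intro n
  induction n with
  | zero => intro d; rw [stayD_zero]; split <;> norm_num
  | succ n ih =>
    intro d
    rw [stayD_succ]
    split
    · calc ∑ e : Fin m → Fin (ℓ+1), kerD κ ℓ m q d e * stayD κ ℓ m q S n e
          ≤ ∑ e : Fin m → Fin (ℓ+1), kerD κ ℓ m q d e * 1 :=
            Finset.sum_le_sum fun e _ =>
              mul_le_mul_of_nonneg_left (ih e) (ker_nonneg hκ hq0 hq1 d e)
        _ = 1 := by simp only [mul_one]; exact ker_sum hm d
    · norm_num

lemma stay_zero_of_notmem (n : ℕ) {d : Fin m → Fin (ℓ+1)} (hd : d ∉ S) :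
    stayD κ ℓ m q S n d = 0 := by
  cases n with
  | zero => rw [stayD_zero, if_neg hd]
  | succ n => rw [stayD_succ, if_neg hd]

lemma stay_block (hκ : 2 ≤ κ) (hq0 : 0 ≤ q) (hq1 : q ≤ 1) {s : ℕ} {B : ℝ} (hB : 0 ≤ B)
    (hs : ∀ e : Fin m → Fin (ℓ+1), stayD κ ℓ m q S s e ≤ B) :
    ∀ (n : ℕ) (d : Fin m → Fin (ℓ+1)), stayD κ ℓ m q S (n + s) d ≤ stayD κ ℓ m q S n d * B := by
  intro n
  induction n with
  | zero =>
    intro d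
    rw [zero_add, stayD_zero]
    by_cases hd : d ∈ S
    · rw [if_pos hd, one_mul]; exact hs d
    · rw [if_neg hd, zero_mul, stay_zero_of_notmem s hd]
  | succ n ih =>
    intro d
    have harr : n + 1 + s = (n + s) + 1 := by omega
    rw [harr, stayD_succ, stayD_succ]
    by_cases hd : d ∈ S
    · rw [if_pos hd, if_pos hd, Finset.sum_mul]
      refine Finset.sum_le_sum fun e _ => ?_
      rw [mul_assoc]
      exact mul_le_mul_of_nonneg_left (ih e) (ker_nonneg hκ hq0 hq1 d e)
    · rw [if_neg hd, if_neg hd, zero_mul]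

lemma stay_le_psi (hκ : 2 ≤ κ) (hq0 : 0 < q) (hq2 : q ≤ 1/2) (hm : 1 ≤ m) (k : ℕ) :
    ∀ (n : ℕ) (d : Fin m → Fin (ℓ+1)),
      stayD κ ℓ m q {e : Fin m → Fin (ℓ+1) | ∀ i, k < (e i : ℕ)} n d
        ≤ 1 - (1/(m:ℝ)) * ∑ j : Fin m,
            (sP κ q n ^ (ℓ - (d j : ℕ)) * wP κ q n ^ (d j : ℕ)) := by
  have hq1 : q ≤ 1 := by linarith
  have hq0' : 0 ≤ q := le_of_lt hq0
  have hm0 : (0:ℝ) < (m:ℝ) := by exact_mod_cast Nat.lt_of_lt_of_le Nat.zero_lt_one hm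
  set Sk : Set (Fin m → Fin (ℓ+1)) := {e : Fin m → Fin (ℓ+1) | ∀ i, k < (e i : ℕ)} with hSk
  have hF01 : ∀ (n : ℕ) (i : ℕ), 0 ≤ sP κ q n ^ (ℓ - i) * wP κ q n ^ i ∧
      sP κ q n ^ (ℓ - i) * wP κ q n ^ i ≤ 1 := by
    intro n i
    obtain ⟨hw0, hws, hs1⟩ := sw_bounds hκ hq0 hq2 n
    have hs0 : 0 ≤ sP κ q n := le_trans hw0 hws
    have hw1 : wP κ q n ≤ 1 := le_trans hws hs1
    constructor
    · positivity
    · exact mul_le_one₀ (pow_le_one₀ hs0 hs1) (pow_nonneg hw0 i) (pow_le_one₀ hw0 hw1)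
  have hpsi_le_one : ∀ (n : ℕ) (d : Fin m → Fin (ℓ+1)),
      (1/(m:ℝ)) * ∑ j : Fin m, (sP κ q n ^ (ℓ - (d j : ℕ)) * wP κ q n ^ (d j : ℕ)) ≤ 1 := by
    intro n d
    have h1 : ∑ j : Fin m, (sP κ q n ^ (ℓ - (d j : ℕ)) * wP κ q n ^ (d j : ℕ))
        ≤ ∑ _j : Fin m, (1:ℝ) := Finset.sum_le_sum fun j _ => (hF01 n (d j : ℕ)).2
    rw [Finset.sum_const, Finset.card_univ, Fintype.card_fin, nsmul_eq_mul, mul_one] at h1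
    calc (1/(m:ℝ)) * ∑ j : Fin m, (sP κ q n ^ (ℓ - (d j : ℕ)) * wP κ q n ^ (d j : ℕ))
        ≤ (1/(m:ℝ)) * m := by
          exact mul_le_mul_of_nonneg_left h1 (by positivity)
      _ = 1 := by field_simp
  intro n
  induction n with
  | zero =>
    intro d
    rw [stayD_zero]
    by_cases hd : d ∈ Sk
    · rw [if_pos hd]
      have hterm : ∀ j : Fin m, sP κ q 0 ^ (ℓ - (d j : ℕ)) * wP κ q 0 ^ (d j : ℕ) = 0 := by
        intro j
        have hdj : (d j : ℕ) ≠ 0 := by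
          have := hd j
          omega
        have hw : wP κ q 0 = 0 := by unfold wP; simp
        rw [hw, zero_pow hdj, mul_zero]
      rw [Finset.sum_congr rfl fun j _ => hterm j]
      simp
    · rw [if_neg hd]
      have := hpsi_le_one 0 d
      linarith
  | succ n ih =>
    intro d
    rw [stayD_succ]
    by_cases hd : d ∈ Sk
    · rw [if_pos hd]
      have hstep1 : ∑ e : Fin m → Fin (ℓ+1), kerD κ ℓ m q d e * stayD κ ℓ m q Sk n e
          ≤ ∑ e : Fin m → Fin (ℓ+1), kerD κ ℓ m q d e *
              (1 - (1/(m:ℝ)) * ∑ j : Fin m,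
                (sP κ q n ^ (ℓ - (e j : ℕ)) * wP κ q n ^ (e j : ℕ))) :=
        Finset.sum_le_sum fun e _ =>
          mul_le_mul_of_nonneg_left (ih e) (ker_nonneg hκ hq0' hq1 d e)
      have hsplit : ∑ e : Fin m → Fin (ℓ+1), kerD κ ℓ m q d e *
              (1 - (1/(m:ℝ)) * ∑ j : Fin m,
                (sP κ q n ^ (ℓ - (e j : ℕ)) * wP κ q n ^ (e j : ℕ)))
          = 1 - (1/(m:ℝ)) * ∑ j : Fin m,
              (sP κ q (n+1) ^ (ℓ - (d j : ℕ)) * wP κ q (n+1) ^ (d j : ℕ)) := by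
        have hmargsum : ∑ e : Fin m → Fin (ℓ+1), kerD κ ℓ m q d e *
            ((1/(m:ℝ)) * ∑ j : Fin m,
              (sP κ q n ^ (ℓ - (e j : ℕ)) * wP κ q n ^ (e j : ℕ)))
            = (1/(m:ℝ)) * ∑ j : Fin m,
              (sP κ q (n+1) ^ (ℓ - (d j : ℕ)) * wP κ q (n+1) ^ (d j : ℕ)) := by
          have h1 : ∀ e : Fin m → Fin (ℓ+1), kerD κ ℓ m q d e *
              ((1/(m:ℝ)) * ∑ j : Fin m,
                (sP κ q n ^ (ℓ - (e j : ℕ)) * wP κ q n ^ (e j : ℕ)))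
              = (1/(m:ℝ)) * ∑ j : Fin m, kerD κ ℓ m q d e *
                (sP κ q n ^ (ℓ - (e j : ℕ)) * wP κ q n ^ (e j : ℕ)) := by
            intro e
            rw [← mul_assoc, mul_comm (kerD κ ℓ m q d e) (1/(m:ℝ)), mul_assoc]
            congr 1
            rw [Finset.mul_sum]
          rw [Finset.sum_congr rfl fun e _ => h1 e, ← Finset.mul_sum]
          congr 1
          rw [Finset.sum_comm]
          have h2 : ∀ j : Fin m, ∑ e : Fin m → Fin (ℓ+1), kerD κ ℓ m q d e *
              (sP κ q n ^ (ℓ - (e j : ℕ)) * wP κ q n ^ (e j : ℕ))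
              = (1/(m:ℝ)) * ∑ j' : Fin m,
                (sP κ q (n+1) ^ (ℓ - (d j' : ℕ)) * wP κ q (n+1) ^ (d j' : ℕ)) := by
            intro j
            rw [ker_marg hm d j (fun u => sP κ q n ^ (ℓ - u) * wP κ q n ^ u)]
            have h3 : ∀ v : Fin (ℓ+1),
                ((1 / (m : ℝ)) * ∑ j' : Fin m, Mmut κ ℓ q (d j' : ℕ) (v : ℕ)) *
                  (sP κ q n ^ (ℓ - (v:ℕ)) * wP κ q n ^ (v:ℕ))
                = (1/(m:ℝ)) * ∑ j' : Fin m, Mmut κ ℓ q (d j' : ℕ) (v : ℕ) *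
                  (sP κ q n ^ (ℓ - (v:ℕ)) * wP κ q n ^ (v:ℕ)) := by
              intro v; rw [mul_assoc, Finset.sum_mul]
            rw [Finset.sum_congr rfl fun v _ => h3 v, ← Finset.mul_sum]
            congr 1
            rw [Finset.sum_comm]
            refine Finset.sum_congr rfl fun j' _ => ?_
            rw [Fin.sum_univ_eq_sum_range
              (fun u => Mmut κ ℓ q (d j' : ℕ) u * (sP κ q n ^ (ℓ - u) * wP κ q n ^ u)) (ℓ+1)]
            exact F_step hκ ℓ q (Nat.lt_succ_iff.mp (d j').isLt) n
          rw [Finset.sum_congr rfl fun j _ => h2 j, Finset.sum_const, Finset.card_univ,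
            Fintype.card_fin, nsmul_eq_mul]
          rw [← mul_assoc]
          have : (m:ℝ) * (1/(m:ℝ)) = 1 := by field_simp
          rw [this, one_mul]
        have hsub : ∀ e : Fin m → Fin (ℓ+1), kerD κ ℓ m q d e *
              (1 - (1/(m:ℝ)) * ∑ j : Fin m,
                (sP κ q n ^ (ℓ - (e j : ℕ)) * wP κ q n ^ (e j : ℕ)))
            = kerD κ ℓ m q d e - kerD κ ℓ m q d e *
              ((1/(m:ℝ)) * ∑ j : Fin m,
                (sP κ q n ^ (ℓ - (e j : ℕ)) * wP κ q n ^ (e j : ℕ))) := by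
          intro e; ring
        rw [Finset.sum_congr rfl fun e _ => hsub e, Finset.sum_sub_distrib, ker_sum hm d,
          hmargsum]
      rw [hsplit] at hstep1
      exact hstep1
    · rw [if_neg hd]
      have := hpsi_le_one (n+1) d
      linarith

end Stay

section Tsum

variable {κ ℓ m : ℕ} {q : ℝ} {S : Set (Fin m → Fin (ℓ + 1))}

lemma stay_tsum (hκ : 2 ≤ κ) (hq0 : 0 ≤ q) (hq1 : q ≤ 1) (hm : 1 ≤ m)
    {T : ℕ} (hT : 1 ≤ T) {γ : ℝ} (hγ0 : 0 < γ) (hγ1 : γ ≤ 1)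
    (hball : ∀ e : Fin m → Fin (ℓ+1), stayD κ ℓ m q S T e ≤ 1 - γ)
    (d : Fin m → Fin (ℓ+1)) :
    (∑' n : ℕ, stayD κ ℓ m q S n d) ≤ (T:ℝ) * (1/γ) := by
  set c : ℝ := 1 - γ with hc
  have hc0 : 0 ≤ c := by rw [hc]; linarith
  have hgeo : ∀ (j r : ℕ) (d : Fin m → Fin (ℓ+1)), stayD κ ℓ m q S (j*T + r) d ≤ c ^ j := by
    intro j
    induction j with
    | zero => intro r d; simpa using stay_le_one hκ hq0 hq1 hm r d
    | succ j ih =>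
      intro r d
      have harr : (j+1)*T + r = T + (j*T + r) := by ring
      rw [harr]
      calc stayD κ ℓ m q S (T + (j*T + r)) d ≤ stayD κ ℓ m q S T d * c^j :=
            stay_block hκ hq0 hq1 (pow_nonneg hc0 j) (fun e => ih r e) T d
        _ ≤ c * c^j := mul_le_mul_of_nonneg_right (hball d) (pow_nonneg hc0 j)
        _ = c^(j+1) := by ring
  have hpoint : ∀ n, stayD κ ℓ m q S n d ≤ c ^ (n / T) := by
    intro n
    have h1 : n = (n / T) * T + n % T := by
      rw [mul_comm]; exact (Nat.div_add_mod n T).symm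
    calc stayD κ ℓ m q S n d = stayD κ ℓ m q S ((n/T)*T + n%T) d := by rw [← h1]
      _ ≤ c ^ (n/T) := hgeo (n/T) (n%T) d
  have hgeosum : ∀ N : ℕ, ∑ b ∈ Finset.range N, c ^ b ≤ 1/γ := by
    intro N
    have h := geom_sum_mul c N
    have hc1 : c - 1 = -γ := by rw [hc]; ring
    rw [hc1, mul_neg] at h
    have hSg : (∑ i ∈ Finset.range N, c^i) * γ = 1 - c^N := by linarith
    have hcN : 0 ≤ c^N := pow_nonneg hc0 N
    rw [le_div_iff₀ hγ0]
    linarith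
  have hTpos : 0 < T := hT
  have hTR : (0:ℝ) ≤ (T:ℝ) := by positivity
  have hcompsum : ∀ N : ℕ, ∑ n ∈ Finset.range N, c ^ (n / T) ≤ (T:ℝ) * (1/γ) := by
    intro N
    rw [Finset.sum_comp (fun b => c ^ b) (fun n => n / T)]
    have hstep : ∀ b ∈ Finset.image (fun n => n / T) (Finset.range N),
        (((Finset.range N).filter (fun n => n / T = b)).card : ℕ) • c ^ b ≤ (T:ℝ) * c ^ b := by
      intro b _
      have hsub : (Finset.range N).filter (fun n => n / T = b) ⊆ Finset.Ico (b*T) (b*T + T) := by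
        intro n hn
        rw [Finset.mem_filter, Finset.mem_range] at hn
        obtain ⟨_, hnb⟩ := hn
        rw [Finset.mem_Ico]
        constructor
        · calc b * T = n / T * T := by rw [hnb]
            _ ≤ n := Nat.div_mul_le_self n T
        · have h2 : n % T < T := Nat.mod_lt _ hTpos
          calc n = T * (n / T) + n % T := (Nat.div_add_mod n T).symm
            _ < T * (n / T) + T := by omega
            _ = b * T + T := by rw [hnb, mul_comm]
      have hcard : ((Finset.range N).filter (fun n => n / T = b)).card ≤ T := by
        calc ((Finset.range N).filter (fun n => n / T = b)).card
            ≤ (Finset.Ico (b*T) (b*T+T)).card := Finset.card_le_card hsub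
          _ = T := by rw [Nat.card_Ico]; omega
      rw [nsmul_eq_mul]
      exact mul_le_mul_of_nonneg_right (by exact_mod_cast hcard) (pow_nonneg hc0 b)
    have himg : Finset.image (fun n => n / T) (Finset.range N) ⊆ Finset.range N := by
      intro b hb
      rw [Finset.mem_image] at hb
      obtain ⟨n, hn, rfl⟩ := hb
      rw [Finset.mem_range] at hn ⊢
      exact Nat.lt_of_le_of_lt (Nat.div_le_self n T) hn
    calc ∑ b ∈ Finset.image (fun n => n / T) (Finset.range N),
          (((Finset.range N).filter (fun n => n / T = b)).card : ℕ) • c ^ b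
        ≤ ∑ b ∈ Finset.image (fun n => n / T) (Finset.range N), (T:ℝ) * c^b :=
          Finset.sum_le_sum hstep
      _ ≤ ∑ b ∈ Finset.range N, (T:ℝ) * c^b :=
          Finset.sum_le_sum_of_subset_of_nonneg himg
            (fun b _ _ => mul_nonneg hTR (pow_nonneg hc0 b))
      _ = (T:ℝ) * ∑ b ∈ Finset.range N, c^b := (Finset.mul_sum _ _ _).symm
      _ ≤ (T:ℝ) * (1/γ) := mul_le_mul_of_nonneg_left (hgeosum N) hTR
  have hpart : ∀ N : ℕ, ∑ n ∈ Finset.range N, stayD κ ℓ m q S n d ≤ (T:ℝ)*(1/γ) :=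
    fun N => le_trans (Finset.sum_le_sum fun n _ => hpoint n) (hcompsum N)
  exact Summable.tsum_le_of_sum_range_le
    (summable_of_sum_range_le (fun n => stay_nonneg hκ hq0 hq1 n d) hpart) hpart

end Tsum

lemma quad_le_exp {x : ℝ} (hx : 0 ≤ x) : x^2/4 ≤ Real.exp x := by
  have h1 : x/2 + 1 ≤ Real.exp (x/2) := Real.add_one_le_exp (x/2)
  have h2 : Real.exp x = Real.exp (x/2) * Real.exp (x/2) := by
    rw [← Real.exp_add]; ring_nf
  nlinarith [Real.exp_pos (x/2)]

end DiscoveryAux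

set_option maxHeartbeats 2000000 in
theorem discovery_time_upper' (κ : ℕ) (hκ : 2 ≤ κ) (a : ℝ) (ha : 0 < a)
    (k : ℕ) (ε : ℝ) (hε : 0 < ε) :
    ∃ ε' > (0 : ℝ), ∃ N : ℕ, ∀ ℓ m : ℕ, ∀ q : ℝ,
    N ≤ ℓ → N ≤ m → 0 < q → q < ε' → |(ℓ : ℝ) * q - a| < ε' →
      ∀ d : Fin m → Fin (ℓ + 1), (∀ i, k < (d i : ℕ)) →
        (∑' n : ℕ, stayD κ ℓ m q {e | ∀ i, k < (e i : ℕ)} n d) ≤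
          (κ : ℝ) ^ ((ℓ : ℝ) * (1 + ε)) := by
  have hK2 : (2:ℝ) ≤ (κ:ℝ) := by exact_mod_cast hκ
  have hK0 : (0:ℝ) < (κ:ℝ) := by linarith
  have hK1 : (1:ℝ) < (κ:ℝ) := by linarith
  set δ : ℝ := 1 - (κ:ℝ) ^ (-(ε/2)) with hδdef
  have hκε : (0:ℝ) < (κ:ℝ) ^ (-(ε/2)) := Real.rpow_pos_of_pos hK0 _
  have hκε1 : (κ:ℝ) ^ (-(ε/2)) < 1 :=
    Real.rpow_lt_one_of_one_lt_of_neg hK1 (by linarith)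
  have hδ0 : 0 < δ := by rw [hδdef]; linarith
  have hδ1 : δ < 1 := by rw [hδdef]; linarith
  set C : ℕ := ⌈(2/a) * (-Real.log δ)⌉₊ + 1 with hCdef
  have hC1 : 1 ≤ C := by omega
  have hCbig : (2/a) * (-Real.log δ) ≤ (C:ℝ) := by
    calc (2/a) * (-Real.log δ) ≤ (⌈(2/a) * (-Real.log δ)⌉₊ : ℝ) := Nat.le_ceil _
      _ ≤ (C:ℝ) := by rw [hCdef]; push_cast; linarith
  have hC0R : (0:ℝ) ≤ (C:ℝ) := by positivity
  have hCexp : Real.exp (-(a/2) * (C:ℝ)) ≤ δ := by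
    rw [← Real.exp_log hδ0]
    apply Real.exp_le_exp.mpr
    have ha2 : (0:ℝ) < a/2 := by linarith
    have hkey : -Real.log δ ≤ (a/2)*(C:ℝ) := by
      calc -Real.log δ = (a/2) * ((2/a) * (-Real.log δ)) := by field_simp
        _ ≤ (a/2) * (C:ℝ) := mul_le_mul_of_nonneg_left hCbig (le_of_lt ha2)
    linarith
  set c0 : ℝ := (ε/2) * Real.log 2 with hc0def
  have hc00 : 0 < c0 := mul_pos (by linarith) (Real.log_pos one_lt_two)
  refine ⟨min (a/2) (1/2), lt_min (by linarith) (by norm_num),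
    ⌈(4*(C:ℝ))/(c0^2)⌉₊ + 1, ?_⟩
  intro ℓ m q hℓ hm hq0 hqε hlqa d hd
  have hN1 : 1 ≤ ⌈(4*(C:ℝ))/(c0^2)⌉₊ + 1 := by omega
  have hℓ1 : 1 ≤ ℓ := le_trans hN1 hℓ
  have hm1 : 1 ≤ m := le_trans hN1 hm
  have hq2 : q ≤ 1/2 := le_of_lt (lt_of_lt_of_le hqε (min_le_right _ _))
  have hq1 : q ≤ 1 := by linarith
  have hq0' : 0 ≤ q := le_of_lt hq0
  have hℓR : (1:ℝ) ≤ (ℓ:ℝ) := by exact_mod_cast hℓ1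
  have hℓbig : 4*(C:ℝ)/(c0^2) ≤ (ℓ:ℝ) := by
    have h1 : (4*(C:ℝ)/(c0^2)) ≤ (⌈(4*(C:ℝ))/(c0^2)⌉₊ : ℝ) := Nat.le_ceil _
    have h2 : ((⌈(4*(C:ℝ))/(c0^2)⌉₊ : ℕ) : ℝ) ≤ (ℓ:ℝ) := by
      have h3 : (⌈(4*(C:ℝ))/(c0^2)⌉₊ : ℕ) ≤ ℓ := by omega
      exact_mod_cast h3
    linarith
  have hℓq : a/2 < (ℓ:ℝ)*q := by
    have h1 : |(ℓ:ℝ)*q - a| < a/2 := lt_of_lt_of_le hlqa (min_le_left _ _)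
    have h2 := abs_lt.mp h1
    linarith
  set T : ℕ := ℓ * C with hTdef
  have hT1 : 1 ≤ T := by
    calc 1 = 1*1 := by norm_num
      _ ≤ ℓ * C := Nat.mul_le_mul hℓ1 hC1
  have hTcast : (T:ℝ) = (ℓ:ℝ)*(C:ℝ) := by rw [hTdef]; push_cast; ring
  obtain ⟨hl0, hl1q⟩ := DiscoveryAux.lam_bounds hκ hq0 hq2
  have h1q0 : (0:ℝ) ≤ 1 - q := by linarith
  have hlamT : (DiscoveryAux.lamP κ q)^T ≤ δ := by
    calc (DiscoveryAux.lamP κ q)^T ≤ (1-q)^T := pow_le_pow_left₀ hl0 hl1q T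
      _ ≤ (Real.exp (-q))^T := pow_le_pow_left₀ h1q0 (Real.one_sub_le_exp_neg q) T
      _ = Real.exp (-q * (T:ℝ)) := by rw [← Real.exp_nat_mul]; ring_nf
      _ ≤ Real.exp (-(a/2) * (C:ℝ)) := by
          apply Real.exp_le_exp.mpr
          rw [hTcast]
          nlinarith
      _ ≤ δ := hCexp
  obtain ⟨hw0, hws, hs1⟩ := DiscoveryAux.sw_bounds hκ hq0 hq2 T
  have hw1 : DiscoveryAux.wP κ q T ≤ 1 := le_trans hws hs1
  have hwlow : (κ:ℝ)^(-(ε/2)) / (κ:ℝ) ≤ DiscoveryAux.wP κ q T := by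
    have h1 : (κ:ℝ)^(-(ε/2)) ≤ 1 - (DiscoveryAux.lamP κ q)^T := by
      have h2 : (κ:ℝ)^(-(ε/2)) = 1 - δ := by rw [hδdef]; ring
      rw [h2]
      have h3 := hlamT
      linarith
    rw [DiscoveryAux.wP]
    exact div_le_div_of_nonneg_right h1 (le_of_lt hK0)
  have hrpowb : (κ:ℝ)^(-(ε/2)) / (κ:ℝ) = (κ:ℝ)^(-(1+ε/2)) := by
    rw [show -((1:ℝ)+ε/2) = (-(ε/2)) + (-1) by ring, Real.rpow_add hK0,
      Real.rpow_neg_one]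
    ring
  have hγlow : (κ:ℝ)^(-((1+ε/2)*(ℓ:ℝ))) ≤ DiscoveryAux.wP κ q T ^ ℓ := by
    have h1 : ((κ:ℝ)^(-(1+ε/2)))^ℓ ≤ DiscoveryAux.wP κ q T ^ ℓ :=
      pow_le_pow_left₀ (le_of_lt (Real.rpow_pos_of_pos hK0 _)) (hrpowb ▸ hwlow) ℓ
    have h2 : ((κ:ℝ)^(-(1+ε/2)))^ℓ = (κ:ℝ)^((-(1+ε/2))*(ℓ:ℝ)) := by
      rw [← Real.rpow_natCast ((κ:ℝ)^(-(1+ε/2))) ℓ, ← Real.rpow_mul (le_of_lt hK0)]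
    rw [show -((1+ε/2)*(ℓ:ℝ)) = (-(1+ε/2))*(ℓ:ℝ) by ring, ← h2]
    exact h1
  have hγ0 : 0 < DiscoveryAux.wP κ q T ^ ℓ :=
    lt_of_lt_of_le (Real.rpow_pos_of_pos hK0 _) hγlow
  have hγ1 : DiscoveryAux.wP κ q T ^ ℓ ≤ 1 := pow_le_one₀ hw0 hw1
  have hball : ∀ e : Fin m → Fin (ℓ+1),
      stayD κ ℓ m q {e' : Fin m → Fin (ℓ+1) | ∀ i, k < (e' i : ℕ)} T e
        ≤ 1 - DiscoveryAux.wP κ q T ^ ℓ := by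
    intro e
    have h1 := DiscoveryAux.stay_le_psi hκ hq0 hq2 hm1 k T e
    have h2 : ∀ j : Fin m, DiscoveryAux.wP κ q T ^ ℓ
        ≤ DiscoveryAux.sP κ q T ^ (ℓ - (e j : ℕ)) * DiscoveryAux.wP κ q T ^ (e j : ℕ) := by
      intro j
      have hi : (e j : ℕ) ≤ ℓ := Nat.lt_succ_iff.mp (e j).isLt
      have h3 : DiscoveryAux.wP κ q T ^ ℓ
          = DiscoveryAux.wP κ q T ^ (ℓ - (e j : ℕ)) * DiscoveryAux.wP κ q T ^ (e j : ℕ) := by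
        rw [← pow_add]
        congr 1
        omega
      rw [h3]
      exact mul_le_mul_of_nonneg_right (pow_le_pow_left₀ hw0 hws _) (pow_nonneg hw0 _)
    have hm0 : (0:ℝ) < (m:ℝ) := by exact_mod_cast hm1
    have h4 : DiscoveryAux.wP κ q T ^ ℓ ≤ (1/(m:ℝ)) * ∑ j : Fin m,
        (DiscoveryAux.sP κ q T ^ (ℓ - (e j : ℕ)) * DiscoveryAux.wP κ q T ^ (e j : ℕ)) := by
      have h5 : ∑ _j : Fin m, DiscoveryAux.wP κ q T ^ ℓ ≤ ∑ j : Fin m,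
          (DiscoveryAux.sP κ q T ^ (ℓ - (e j : ℕ)) * DiscoveryAux.wP κ q T ^ (e j : ℕ)) :=
        Finset.sum_le_sum fun j _ => h2 j
      rw [Finset.sum_const, Finset.card_univ, Fintype.card_fin, nsmul_eq_mul] at h5
      calc DiscoveryAux.wP κ q T ^ ℓ
          = (1/(m:ℝ)) * ((m:ℝ) * DiscoveryAux.wP κ q T ^ ℓ) := by field_simp
        _ ≤ (1/(m:ℝ)) * ∑ j : Fin m,
            (DiscoveryAux.sP κ q T ^ (ℓ - (e j : ℕ)) * DiscoveryAux.wP κ q T ^ (e j : ℕ)) :=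
            mul_le_mul_of_nonneg_left h5 (by positivity)
    linarith
  have htsum := DiscoveryAux.stay_tsum hκ hq0' hq1 hm1 hT1 hγ0 hγ1 hball d
  have hinvg : (1:ℝ)/(DiscoveryAux.wP κ q T ^ ℓ) ≤ (κ:ℝ)^((1+ε/2)*(ℓ:ℝ)) := by
    rw [div_le_iff₀ hγ0]
    calc (1:ℝ) = (κ:ℝ)^((1+ε/2)*(ℓ:ℝ)) * (κ:ℝ)^(-((1+ε/2)*(ℓ:ℝ))) := by
          rw [← Real.rpow_add hK0]
          norm_num
      _ ≤ (κ:ℝ)^((1+ε/2)*(ℓ:ℝ)) * DiscoveryAux.wP κ q T ^ ℓ :=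
          mul_le_mul_of_nonneg_left hγlow (le_of_lt (Real.rpow_pos_of_pos hK0 _))
  have hTle : (T:ℝ) ≤ (κ:ℝ)^((ε/2)*(ℓ:ℝ)) := by
    have hexp : (T:ℝ) ≤ Real.exp (c0 * (ℓ:ℝ)) := by
      rw [hTcast]
      have hquad := DiscoveryAux.quad_le_exp (mul_nonneg (le_of_lt hc00) (by linarith) :
        (0:ℝ) ≤ c0*(ℓ:ℝ))
      have h6 : 4*(C:ℝ)/(c0^2) * (c0^2 * (ℓ:ℝ) / 4) ≤ (ℓ:ℝ) * (c0^2*(ℓ:ℝ)/4) :=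
        mul_le_mul_of_nonneg_right hℓbig (by positivity)
      have h7 : 4*(C:ℝ)/(c0^2) * (c0^2 * (ℓ:ℝ) / 4) = (C:ℝ)*(ℓ:ℝ) := by
        field_simp
      rw [h7] at h6
      nlinarith
    have h8 : Real.exp (c0 * (ℓ:ℝ)) = (2:ℝ)^((ε/2)*(ℓ:ℝ)) := by
      rw [Real.rpow_def_of_pos (by norm_num : (0:ℝ) < 2)]
      congr 1
      rw [hc0def]
      ring
    have h9 : (2:ℝ)^((ε/2)*(ℓ:ℝ)) ≤ (κ:ℝ)^((ε/2)*(ℓ:ℝ)) :=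
      Real.rpow_le_rpow (by norm_num) hK2 (by positivity)
    linarith
  calc (∑' n : ℕ, stayD κ ℓ m q {e | ∀ i, k < (e i : ℕ)} n d)
      ≤ (T:ℝ)*(1/(DiscoveryAux.wP κ q T ^ ℓ)) := htsum
    _ ≤ (κ:ℝ)^((ε/2)*(ℓ:ℝ)) * (κ:ℝ)^((1+ε/2)*(ℓ:ℝ)) :=
        mul_le_mul hTle hinvg (by positivity) (le_of_lt (Real.rpow_pos_of_pos hK0 _))
    _ = (κ:ℝ)^((ℓ:ℝ)*(1+ε)) := by
        rw [← Real.rpow_add hK0]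
        congr 1
        ring



/-- **Upper bound for the discovery time (neutral phase).**
Asymptotically, for any `k ≥ 0`, `ε > 0` and `d ∈ 𝒩_k`:
`E(τ*_k | D_0 = d) ≤ κ^{ℓ(1+ε)}`, where
`E(τ*_k | D_0 = d) = Σ_{n ≥ 0} P(τ*_k > n | D_0 = d)`. -/
theorem discovery_time_upper (κ : ℕ) (hκ : 2 ≤ κ) (a α : ℝ) (ha : 0 < a) (hα : 0 < α)
    (k : ℕ) (ε : ℝ) (hε : 0 < ε) :
    Asympα a α (fun ℓ m q =>
      ∀ d : Fin m → Fin (ℓ + 1), (∀ i, k < (d i : ℕ)) →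
        (∑' n : ℕ, stayD κ ℓ m q {e | ∀ i, k < (e i : ℕ)} n d) ≤
          (κ : ℝ) ^ ((ℓ : ℝ) * (1 + ε))) := by
  obtain ⟨ε', hε', N, h⟩ := discovery_time_upper' κ hκ a ha k ε hε
  exact ⟨ε', hε', N, fun ℓ m q h1 h2 h3 h4 h5 _ => h ℓ m q h1 h2 h3 h4 h5⟩

end
end
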